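/- Let μ : Ω → ℝ be integrable under probability measure P, α ∈ (0,1), and η₀ be an α-quantile of μ with P(μ = η₀) = 0. Then the indicator function h₀ = 1[μ > η₀] satisfies E_P[h₀] = 1−α and achieves the supremum of (1/(1−α))·E_P[h·μ] over all measurable h : Ω → [0,1] with E_P[h] = 1−α. -/

import Mathlib

open MeasureTheory ENNReal Set

/-- The worst `(1-α)`-subsample is selected by thresholding at the `α`-quantile:
`h₀ = 1[μ > η₀]` is feasible and achieves the supremum. -/
theorem stmt_3 {Ω : Type*} [MeasurableSpace Ω] (P : Measure Ω) [IsProbabilityMeasure P]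
    (μ : Ω → ℝ) (hμm : Measurable μ) (hμi : Integrable μ P)
    (α : ℝ) (hα : α ∈ Ioo (0 : ℝ) 1)
    (η₀ : ℝ) (hquant : P {ω | μ ω ≤ η₀} = ENNReal.ofReal α)
    (hatom : P {ω | μ ω = η₀} = 0)
    (h₀ : Ω → ℝ) (hh₀ : h₀ = fun ω => if η₀ < μ ω then 1 else 0) :
    (∫ ω, h₀ ω ∂P) = 1 - α ∧
    ∀ h : Ω → ℝ, Measurable h → (∀ ω, h ω ∈ Icc (0 : ℝ) 1) →
      (∫ ω, h ω ∂P) = 1 - α →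
      (1 - α)⁻¹ * (∫ ω, h ω * μ ω ∂P) ≤ (1 - α)⁻¹ * (∫ ω, h₀ ω * μ ω ∂P) := by
  obtain ⟨hα0, hα1⟩ := hα
  have h1α : (0:ℝ) < 1 - α := by linarith
  set s : Set Ω := {ω | η₀ < μ ω} with hs
  have hsm : MeasurableSet s := measurableSet_lt measurable_const hμm
  have h₀eq : h₀ = s.indicator (fun _ => (1:ℝ)) := by
    funext ω
    by_cases hω : η₀ < μ ω <;>
      simp [hh₀, Set.indicator, hs, Set.mem_setOf_eq, hω]
  have hPs : P s = ENNReal.ofReal (1 - α) := by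
    have hcompl : s = {ω | μ ω ≤ η₀}ᶜ := by ext ω; simp [hs, not_le]
    rw [hcompl, measure_compl (measurableSet_le hμm measurable_const) (measure_ne_top _ _),
      hquant, measure_univ, ENNReal.ofReal_sub _ hα0.le, ENNReal.ofReal_one]
  have ih₀ : Integrable h₀ P := by
    rw [h₀eq]; exact (integrable_const (1:ℝ)).indicator hsm
  have hh₀m : Measurable h₀ := by
    rw [hh₀]
    exact Measurable.ite (measurableSet_lt measurable_const hμm) measurable_const
      measurable_const
  have hh₀bd : ∀ ω, ‖h₀ ω‖ ≤ 1 := by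
    intro ω; rw [hh₀]; dsimp; split <;> simp
  have hint0 : (∫ ω, h₀ ω ∂P) = 1 - α := by
    rw [h₀eq, integral_indicator hsm]
    simp [measureReal_def, hPs, ENNReal.toReal_ofReal h1α.le]
  refine ⟨hint0, ?_⟩
  intro h hm hbd hint
  have hhbd : ∀ ω, ‖h ω‖ ≤ 1 := by
    intro ω
    rw [Real.norm_eq_abs, abs_le]
    exact ⟨by linarith [(hbd ω).1], (hbd ω).2⟩
  have ih : Integrable h P :=
    (integrable_const (1:ℝ)).mono' hm.aestronglyMeasurable (Filter.Eventually.of_forall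
      (by simpa using hhbd))
  have ih₀μ : Integrable (fun ω => h₀ ω * μ ω) P :=
    hμi.bdd_mul hh₀m.aestronglyMeasurable (Filter.Eventually.of_forall hh₀bd)
  have ihμ : Integrable (fun ω => h ω * μ ω) P :=
    hμi.bdd_mul hm.aestronglyMeasurable (Filter.Eventually.of_forall hhbd)
  have key : 0 ≤ ∫ ω, (h₀ ω - h ω) * (μ ω - η₀) ∂P := by
    apply integral_nonneg
    intro ω
    rw [hh₀]; dsimp
    rcases lt_trichotomy η₀ (μ ω) with hlt | heq | hgt
    · rw [if_pos hlt]
      exact mul_nonneg (by linarith [(hbd ω).2]) (by linarith)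
    · rw [← heq]; simp
    · rw [if_neg (not_lt.mpr hgt.le)]
      have h1 : (0:ℝ) - h ω ≤ 0 := by linarith [(hbd ω).1]
      have h2 : μ ω - η₀ ≤ 0 := by linarith
      nlinarith
  have expand : (∫ ω, (h₀ ω - h ω) * (μ ω - η₀) ∂P)
      = ((∫ ω, h₀ ω * μ ω ∂P) - ∫ ω, h ω * μ ω ∂P)
        - η₀ * ((∫ ω, h₀ ω ∂P) - ∫ ω, h ω ∂P) := by
    have hpt : ∀ ω, (h₀ ω - h ω) * (μ ω - η₀)
        = (h₀ ω * μ ω - h ω * μ ω) - η₀ * (h₀ ω - h ω) := by intro ω; ring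
    simp_rw [hpt]
    have i1 : Integrable (fun ω => h₀ ω * μ ω - h ω * μ ω) P := ih₀μ.sub ihμ
    have i2 : Integrable (fun ω => η₀ * (h₀ ω - h ω)) P := (ih₀.sub ih).const_mul η₀
    rw [integral_sub i1 i2, integral_sub ih₀μ ihμ, integral_const_mul, integral_sub ih₀ ih]
  have hle : (∫ ω, h ω * μ ω ∂P) ≤ ∫ ω, h₀ ω * μ ω ∂P := by
    rw [expand, hint0, hint] at key; linarith
  exact mul_le_mul_of_nonneg_left hle (by positivity)
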